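/- Let n > 3 be an integer and b ∈ {2, −2}. If b̃ = sgn(b) or b̃ = sgn(b)·(n−3)/(n−1), then the matrix T̃ₙ(b, b̃) is singular (its determinant is zero). -/

import Mathlib

open Matrix BigOperators Finset

/-- The symmetric tridiagonal near-Toeplitz matrix with corner diagonal entries `bt`,
interior diagonal entries `b`, and off-diagonal entries `-1` (0-based indices). -/
noncomputable def Ttilde (n : ℕ) (b bt : ℝ) : Matrix (Fin n) (Fin n) ℝ :=
  Matrix.of fun i j =>
    if (i : ℕ) = (j : ℕ) then (if (i : ℕ) = 0 ∨ (i : ℕ) = n - 1 then bt else b)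
    else if (i : ℕ) + 1 = (j : ℕ) ∨ (j : ℕ) + 1 = (i : ℕ) then (-1 : ℝ) else 0

/-- The maximum absolute row sum (operator norm induced by the sup norm). -/
noncomputable def normInf {n : ℕ} (A : Matrix (Fin n) (Fin n) ℝ) : ℝ :=
  ⨆ i : Fin n, ∑ j : Fin n, |A i j|

lemma tri_row (n : ℕ) (b bt : ℝ) (v : Fin n → ℝ) (i : Fin n) :
    (Ttilde n b bt).mulVec v i =
      (if h : 0 < (i : ℕ) then -v ⟨(i : ℕ) - 1, by omega⟩ else 0)
      + (if (i : ℕ) = 0 ∨ (i : ℕ) = n - 1 then bt else b) * v i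
      + (if h : (i : ℕ) + 1 < n then -v ⟨(i : ℕ) + 1, h⟩ else 0) := by
  have key : ∀ j : Fin n, Ttilde n b bt i j * v j =
      (if (j : ℕ) + 1 = (i : ℕ) then -v j else 0)
      + (if j = i then (if (i : ℕ) = 0 ∨ (i : ℕ) = n - 1 then bt else b) * v j else 0)
      + (if (i : ℕ) + 1 = (j : ℕ) then -v j else 0) := by
    intro j
    simp only [Ttilde, of_apply, Fin.ext_iff]
    split_ifs <;> first | ring1 | (exfalso; omega)
  simp only [Matrix.mulVec, dotProduct]
  rw [Finset.sum_congr rfl fun j _ => key j, Finset.sum_add_distrib, Finset.sum_add_distrib]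
  congr 1
  · congr 1
    · by_cases h : 0 < (i : ℕ)
      · rw [dif_pos h]
        rw [Finset.sum_eq_single_of_mem (⟨(i : ℕ) - 1, by omega⟩ : Fin n) (Finset.mem_univ _)]
        · rw [if_pos (by simp; omega)]
        · intro j _ hj
          rw [if_neg]
          simp only [Fin.ne_iff_vne, Fin.val_mk] at hj
          omega
      · rw [dif_neg h]
        apply Finset.sum_eq_zero
        intro j _
        rw [if_neg]; omega
    · rw [Finset.sum_ite_eq' Finset.univ i, if_pos (Finset.mem_univ _)]
  · by_cases h : (i : ℕ) + 1 < n
    · rw [dif_pos h]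
      rw [Finset.sum_eq_single_of_mem (⟨(i : ℕ) + 1, h⟩ : Fin n) (Finset.mem_univ _)]
      · rw [if_pos rfl]
      · intro j _ hj
        rw [if_neg]
        simp only [Fin.ne_iff_vne, Fin.val_mk] at hj
        omega
    · rw [dif_neg h]
      apply Finset.sum_eq_zero
      intro j _
      rw [if_neg]
      omega

lemma ker_aux (n : ℕ) (hn : 3 < n) (b bt s : ℝ) (hss : s * s = 1) (hb : b = 2 * s)
    (c : ℕ → ℝ) (hc0 : c 0 ≠ 0)
    (hlin : ∀ k, c k - 2 * c (k + 1) + c (k + 2) = 0)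
    (h0 : bt * c 0 - s * c 1 = 0)
    (hN : s * bt * c (n - 1) - c (n - 2) = 0) :
    (Ttilde n b bt).det = 0 := by
  obtain ⟨m, rfl⟩ : ∃ m, n = m + 2 := ⟨n - 2, by omega⟩
  have hm : 2 ≤ m := by omega
  norm_num at hN
  rw [← Matrix.exists_mulVec_eq_zero_iff]
  refine ⟨fun j => s ^ (j : ℕ) * c (j : ℕ), ?_, ?_⟩
  · intro hv
    have h := congrFun hv ⟨0, by omega⟩
    simp only [Fin.val_mk, pow_zero, one_mul, Pi.zero_apply] at h
    exact hc0 h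
  · funext i
    rw [tri_row]
    simp only [Pi.zero_apply, Fin.val_mk]
    by_cases h0i : (i : ℕ) = 0
    · rw [dif_neg (by omega), if_pos (by omega), dif_pos (by omega)]
      simp only [h0i, pow_zero, pow_one, one_mul, zero_add]
      linear_combination h0
    · by_cases hNi : (i : ℕ) = m + 1
      · rw [dif_pos (by omega), if_pos (by omega), dif_neg (by omega)]
        have e1 : (i : ℕ) - 1 = m := by omega
        rw [e1, hNi, pow_succ]
        linear_combination (s ^ m) * hN
      · obtain ⟨k, hk⟩ : ∃ k, (i : ℕ) = k + 1 := ⟨(i : ℕ) - 1, by omega⟩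
        rw [dif_pos (by omega), if_neg (by omega), dif_pos (by omega)]
        have e1 : (i : ℕ) - 1 = k := by omega
        rw [e1, hk, hb]
        have e2 : k + 1 + 1 = k + 2 := rfl
        rw [e2]
        simp only [pow_succ]
        linear_combination (-(s ^ k)) * hlin k + (s ^ k * (2 * c (k + 1) - c (k + 2))) * hss

theorem stmt2 (n : ℕ) (hn : 3 < n) (b bt : ℝ) (hb : b = 2 ∨ b = -2)
    (hbt : bt = Real.sign b ∨ bt = Real.sign b * (((n : ℝ) - 3) / ((n : ℝ) - 1))) :
    (Ttilde n b bt).det = 0 := by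
  have hn4 : (4 : ℝ) ≤ (n : ℝ) := by exact_mod_cast hn
  have hn1 : ((n : ℝ) - 1) ≠ 0 := by linarith
  obtain ⟨s, hs1, hs2, hss⟩ : ∃ s : ℝ, b = 2 * s ∧ Real.sign b = s ∧ s * s = 1 := by
    rcases hb with rfl | rfl
    · exact ⟨1, by norm_num, Real.sign_of_pos (by norm_num), by norm_num⟩
    · exact ⟨-1, by norm_num, Real.sign_of_neg (by norm_num), by norm_num⟩
  rw [hs2] at hbt
  have c1 : ((n - 1 : ℕ) : ℝ) = (n : ℝ) - 1 := by
    rw [Nat.cast_sub (by omega)]; norm_num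
  have c2 : ((n - 2 : ℕ) : ℝ) = (n : ℝ) - 2 := by
    rw [Nat.cast_sub (by omega)]; norm_num
  rcases hbt with hbt | hbt <;> rw [hbt]
  · refine ker_aux n hn b _ s hss hs1 (fun _ => 1) (by norm_num) (by intro k; norm_num) ?_ ?_
    · ring
    · linear_combination hss
  · refine ker_aux n hn b _ s hss hs1 (fun j => 2 * (j : ℝ) - ((n : ℝ) - 1)) ?_ ?_ ?_ ?_
    · norm_num; linarith
    · intro k; push_cast; ring
    · push_cast; field_simp; ring
    · simp only [c1, c2]; field_simp; linear_combination ((n : ℝ) - 3) * hss
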